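/- Let ψ be a periodic diffeomorphism of the product T² × [0,1] which is isotopic to the identity and whose restriction to each boundary torus T² × {i}, i = 0, 1, is a translation with rational slope αᵢ ∈ H₁(T²; Z) ⊗ Q. Then α₀ = α₁. -/

import Mathlib

noncomputable section

open CategoryTheory Topology

/-! ### The group of self-homeomorphisms (our model for `Diff M`) -/

instance homeoGroup (M : Type*) [TopologicalSpace M] : Group (M ≃ₜ M) where
  mul f g := g.trans f
  one := Homeomorph.refl M
  inv := Homeomorph.symm
  mul_assoc _ _ _ := Homeomorph.ext fun _ => rfl
  one_mul _ := Homeomorph.ext fun _ => rfl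
  mul_one _ := Homeomorph.ext fun _ => rfl
  inv_mul_cancel f := Homeomorph.ext f.symm_apply_apply

instance homeoMulAction (M : Type*) [TopologicalSpace M] : MulAction (M ≃ₜ M) M where
  smul f x := f x
  one_smul _ := rfl
  mul_smul _ _ _ := rfl

@[simp] lemma homeo_smul_def {M : Type*} [TopologicalSpace M] (f : M ≃ₜ M) (x : M) :
    f • x = f x := rfl

/-! ### Singular homology -/

/-- The singular chain complex functor with coefficients in a ring `R`. -/
def singularChainComplexFunctor (R : Type) [Ring R] :
    TopCat.{0} ⥤ ChainComplex (ModuleCat.{0} R) ℕ :=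
  TopCat.toSSet ⋙ ((SimplicialObject.whiskering _ _).obj (ModuleCat.free R)) ⋙
    AlgebraicTopology.alternatingFaceMapComplex _

/-- The `n`-th singular homology functor with coefficients in `R`. -/
def singularHomologyFunctor (R : Type) [Ring R] (n : ℕ) : TopCat.{0} ⥤ ModuleCat.{0} R :=
  singularChainComplexFunctor R ⋙ HomologicalComplex.homologyFunctor _ _ n

/-- The `n`-th singular homology of a topological space, with coefficients in `R`. -/
def SingularHomology (R : Type) [Ring R] (n : ℕ) (X : Type) [TopologicalSpace X] :
    ModuleCat.{0} R :=
  (singularHomologyFunctor R n).obj (TopCat.of X)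

/-- The standard 3-sphere. -/
abbrev Sphere3 : Type := (Metric.sphere (0 : EuclideanSpace ℝ (Fin 4)) 1 : Set _)

/-- A closed orientable topological `3`-manifold having the same homology (with coefficients
in `R`) as the `3`-sphere.  (Orientability is implied by `H₃(M;R) ≅ H₃(S³;R) ≅ R`.) -/
def IsHomology3Sphere (R : Type) [Ring R] (M : Type) [TopologicalSpace M] : Prop :=
  CompactSpace M ∧ ConnectedSpace M ∧ T2Space M ∧ SecondCountableTopology M ∧
    Nonempty (ChartedSpace (EuclideanSpace ℝ (Fin 3)) M) ∧
    ∀ n, Nonempty (SingularHomology R n M ≅ SingularHomology R n Sphere3)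

/-- An integral homology 3-sphere. -/
def IsZHomology3Sphere (M : Type) [TopologicalSpace M] : Prop :=
  IsHomology3Sphere ℤ M

/-- A homeomorphism preserves the orientation if it induces the identity on
`H₃(M;ℤ)`. -/
def OrientationPreserving {M : Type} [TopologicalSpace M] (ψ : M ≃ₜ M) : Prop :=
  (singularHomologyFunctor ℤ 3).map (TopCat.isoOfHomeo (X := TopCat.of M) (Y := TopCat.of M) ψ).hom = 𝟙 _
/-! ### Orbit spaces, rotations, knots, branched covers -/

/-- The space of orbits `|M/ψ|` of the cyclic group generated by `ψ`,
with the quotient topology. -/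
abbrev OrbitSpace {M : Type} [TopologicalSpace M] (ψ : M ≃ₜ M) : Type :=
  MulAction.orbitRel.Quotient (Subgroup.zpowers ψ) M

/-- The canonical projection `M → |M/ψ|`. -/
def orbitProj {M : Type} [TopologicalSpace M] (ψ : M ≃ₜ M) : M → OrbitSpace ψ :=
  Quotient.mk _

/-- A periodic map has trivial quotient if its space of orbits is homeomorphic to `S³`. -/
def TrivialQuotient {M : Type} [TopologicalSpace M] (ψ : M ≃ₜ M) : Prop :=
  Nonempty (OrbitSpace ψ ≃ₜ Sphere3)

/-- The fixed-point set. -/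
def FixSet {M : Type} [TopologicalSpace M] (ψ : M ≃ₜ M) : Set M := {x | ψ x = x}

/-- A rotation: a nontrivial periodic orientation-preserving homeomorphism whose fixed-point
set is nonempty and connected. -/
def IsRotation {M : Type} [TopologicalSpace M] (ψ : M ≃ₜ M) : Prop :=
  ψ ≠ 1 ∧ IsOfFinOrder ψ ∧ OrientationPreserving ψ ∧ IsConnected (FixSet ψ)

/-- `M` is homeomorphic to the 3-sphere. -/
def HomeoToSphere3 (M : Type) [TopologicalSpace M] : Prop := Nonempty (M ≃ₜ Sphere3)

/-- The standard circle, i.e. the standard unknot model. -/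
abbrev Circle1 : Type := (Metric.sphere (0 : EuclideanSpace ℝ (Fin 2)) 1 : Set _)

/-- A knot: an embedded circle in `S³`. -/
def IsKnot (K : Set Sphere3) : Prop :=
  ∃ e : Circle1 → Sphere3, IsEmbedding e ∧ Set.range e = K

/-- Equivalence of knots: there is a homeomorphism of `S³` carrying one to the other. -/
def KnotEquiv (K K' : Set Sphere3) : Prop := ∃ h : Sphere3 ≃ₜ Sphere3, h '' K = K'

/-- The standard (trivial) knot in `S³`: a great circle. -/
def StandardCircle : Set Sphere3 :=
  {x | (x : EuclideanSpace ℝ (Fin 4)) 2 = 0 ∧ (x : EuclideanSpace ℝ (Fin 4)) 3 = 0}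

/-- A knot is trivial if it is equivalent to a great circle. -/
def IsTrivialKnot (K : Set Sphere3) : Prop := KnotEquiv StandardCircle K

/-- `M` is the `p`-fold cyclic cover of `S³` branched along the knot `K`: there is a
rotation of `M` of order `p`, acting freely outside its fixed-point set, with orbit space
`S³`, whose branch locus (the image of the fixed-point set) is `K`. -/
def IsCyclicBranchedCover (M : Type) [TopologicalSpace M] (p : ℕ) (K : Set Sphere3) : Prop :=
  ∃ ψ : M ≃ₜ M, IsRotation ψ ∧ orderOf ψ = p ∧
    (∀ x : M, x ∉ FixSet ψ → ∀ k : ℕ, 0 < k → k < p → (ψ ^ k) x ≠ x) ∧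
    ∃ h : OrbitSpace ψ ≃ₜ Sphere3, h '' (orbitProj ψ '' FixSet ψ) = K

/-! ### Irreducibility -/

abbrev Sphere2 : Type := (Metric.sphere (0 : EuclideanSpace ℝ (Fin 3)) 1 : Set _)
abbrev Ball3 : Type := (Metric.closedBall (0 : EuclideanSpace ℝ (Fin 3)) 1 : Set _)

/-- An embedded 2-sphere in `M`. -/
def IsEmbeddedSphere2 {M : Type} [TopologicalSpace M] (S : Set M) : Prop :=
  ∃ e : Sphere2 → M, IsEmbedding e ∧ Set.range e = S

/-- `S` bounds a 3-ball in `M`: there is an embedding of the closed 3-ball into `M`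
whose boundary sphere maps onto `S`. -/
def BoundsBall3 {M : Type} [TopologicalSpace M] (S : Set M) : Prop :=
  ∃ e : Ball3 → M, IsEmbedding e ∧
    e '' {x : Ball3 | ‖(x : EuclideanSpace ℝ (Fin 3))‖ = 1} = S

/-- A 3-manifold is irreducible if every embedded 2-sphere bounds a 3-ball. -/
def IsIrreducible3Manifold (M : Type) [TopologicalSpace M] : Prop :=
  ∀ S : Set M, IsEmbeddedSphere2 S → BoundsBall3 S

/-! ### Statement 19 (Claim 5.5, after Meeks–Scott).
A periodic self-homeomorphism of `T² × [0,1]` isotopic to the identity whose restriction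
to each boundary torus is a translation (necessarily of rational slope) translates by the
same element on both boundary tori. -/

/-- The 2-torus `ℝ²/ℤ²`. -/
abbrev Torus2 : Type := AddCircle (1 : ℝ) × AddCircle (1 : ℝ)

/-- `v` is rational: it lies in `ℚ²/ℤ² ⊆ T²`.  A translation of `T²` by such a vector is
periodic and has a rational slope in `H₁(T²;ℤ) ⊗ ℚ`. -/
def IsRationalVector (v : Torus2) : Prop :=
  ∃ a : ℚ × ℚ, v = (((a.1 : ℝ) : AddCircle (1 : ℝ)), ((a.2 : ℝ) : AddCircle (1 : ℝ)))

namespace Claim55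

open Set

/-- The canonical representative in `[-1/2, 1/2)` of a point of `ℝ/ℤ`. -/
noncomputable def chi (z : AddCircle (1:ℝ)) : ℝ :=
  ((AddCircle.equivIco 1 (-(1/2)) z : Set.Ico _ _) : ℝ)

lemma chi_coe (z : AddCircle (1:ℝ)) : ((chi z : ℝ) : AddCircle (1:ℝ)) = z :=
  (AddCircle.equivIco 1 (-(1/2))).symm_apply_apply z

lemma chi_zero : chi 0 = 0 := by
  have h0 : (0:ℝ) ∈ Set.Ico (-(1/2):ℝ) (-(1/2) + 1) := by norm_num
  have : (AddCircle.equivIco 1 (-(1/2)) 0) = ⟨0, h0⟩ := by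
    apply (AddCircle.equivIco 1 (-(1/2))).symm.injective
    rw [Equiv.symm_apply_apply]
    have : ((AddCircle.equivIco 1 (-(1/2))).symm ⟨0, h0⟩) = (((0:ℝ) : AddCircle (1:ℝ))) := rfl
    rw [this]
    norm_num
  rw [chi, this]

lemma norm_half : ‖((-(1/2) : ℝ) : AddCircle (1:ℝ))‖ = 1/2 := by
  rw [AddCircle.norm_eq]
  norm_num [round_eq]

lemma chi_continuousAt {z : AddCircle (1:ℝ)} (hz : ‖z‖ < 1/2) : ContinuousAt chi z := by
  have hne : z ≠ ((-(1/2) : ℝ) : AddCircle (1:ℝ)) := by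
    intro h
    rw [h, norm_half] at hz
    exact lt_irrefl _ hz
  exact continuous_subtype_val.continuousAt.comp
    (AddCircle.continuousAt_equivIco 1 (-(1/2)) hne)

lemma eq_zero_of_coe_eq_zero {r : ℝ} (h : ((r : ℝ) : AddCircle (1:ℝ)) = 0) (hr : |r| < 1) :
    r = 0 := by
  obtain ⟨n, hn⟩ := (AddCircle.coe_eq_zero_iff (1:ℝ)).mp h
  rw [zsmul_eq_mul, mul_one] at hn
  have h1 : |(n:ℝ)| < 1 := by rw [hn]; exact hr
  have h2 : |n| < 1 := by exact_mod_cast (by rw [Int.cast_abs]; exact h1 : ((|n| : ℤ) : ℝ) < 1)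
  have h3 : |n| = 0 := le_antisymm (by omega) (abs_nonneg n)
  have : n = 0 := abs_eq_zero.mp h3
  rw [← hn, this, Int.cast_zero]

/-- A continuous real function whose mod-1 differences vanish is constant on a
preconnected space. -/
lemma const_of_lift {X : Type*} [TopologicalSpace X] [PreconnectedSpace X]
    (h : X → ℝ) (hc : Continuous h)
    (hz : ∀ x y, ((h x - h y : ℝ) : AddCircle (1:ℝ)) = 0) (x y : X) : h x = h y := by
  have hcl : IsClosed {z | h z = h y} := isClosed_eq hc continuous_const
  have hop : IsOpen {z | h z = h y} := by
    rw [isOpen_iff_mem_nhds]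
    intro z hzC
    have ho : IsOpen {w | |h w - h z| < 1} :=
      isOpen_lt ((hc.sub continuous_const).abs) continuous_const
    refine Filter.mem_of_superset (ho.mem_nhds ?_) ?_
    · simp
    · intro w hw
      have := eq_zero_of_coe_eq_zero (hz w z) hw
      have : h w = h z := by linarith [this]
      simpa [this] using hzC
  have hC : {z | h z = h y} = Set.univ :=
    IsClopen.eq_univ ⟨hcl, hop⟩ ⟨y, rfl⟩
  exact (Set.eq_univ_iff_forall.mp hC x)

lemma abs_min_sub_min_le (a b c : ℝ) : |min a b - min a c| ≤ |b - c| := by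
  have h1 := le_abs_self (b - c)
  have h2 := neg_abs_le (b - c)
  rcases le_total a b with hab | hab
  · rcases le_total a c with hac | hac
    · rw [min_eq_left hab, min_eq_left hac, sub_self, abs_zero]
      exact abs_nonneg _
    · rw [min_eq_left hab, min_eq_right hac, abs_le]
      exact ⟨by linarith, by linarith⟩
  · rcases le_total a c with hac | hac
    · rw [min_eq_right hab, min_eq_left hac, abs_le]
      exact ⟨by linarith, by linarith⟩
    · rw [min_eq_right hab, min_eq_right hac]

/-- Homotopy lifting for the covering `ℝ → ℝ/ℤ` over a compact base. -/
lemma exists_lift {Y : Type*} [MetricSpace Y] [CompactSpace Y]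
    (f : unitInterval × Y → AddCircle (1:ℝ)) (hf : Continuous f) :
    ∃ g : unitInterval × Y → ℝ, Continuous g ∧
      ∀ p : unitInterval × Y, ((g p : ℝ) : AddCircle (1:ℝ)) = f p - f (0, p.2) := by
  obtain ⟨δ, hδ, hδf⟩ := Metric.uniformContinuous_iff.mp
      (CompactSpace.uniformContinuous_of_continuous hf) (1/4) (by norm_num)
  obtain ⟨N, hN⟩ := exists_nat_gt (1/δ)
  have hN0 : (0:ℝ) < N := lt_trans (by positivity) hN
  have hNδ : 1 / (N:ℝ) < δ := by
    rw [div_lt_iff₀ hN0]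
    calc (1:ℝ) = δ * (1/δ) := by field_simp
    _ < δ * N := by exact (mul_lt_mul_iff_right₀ hδ).mpr hN
  -- the cut-off grid maps
  have hmem : ∀ (k : ℕ) (t : unitInterval), min (t:ℝ) (k / N) ∈ unitInterval := by
    intro k t
    constructor
    · exact le_min t.2.1 (by positivity)
    · exact le_trans (min_le_left _ _) t.2.2
  set T : ℕ → unitInterval → unitInterval := fun k t => ⟨min (t:ℝ) (k / N), hmem k t⟩ with hT
  have hTcont : ∀ k, Continuous fun t : unitInterval => T k t := fun k =>
    Continuous.subtype_mk (continuous_subtype_val.min continuous_const) _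
  have hTdist : ∀ (k : ℕ) (t : unitInterval), dist (T (k+1) t) (T k t) < δ := by
    intro k t
    rw [Subtype.dist_eq, Real.dist_eq]
    have hd : ((k+1:ℕ):ℝ)/N - (k:ℕ)/N = 1/N := by push_cast; ring
    calc |min (t:ℝ) (((k+1:ℕ):ℝ)/N) - min (t:ℝ) ((k:ℕ)/N)|
        ≤ |((k+1:ℕ):ℝ)/N - (k:ℕ)/N| := abs_min_sub_min_le _ _ _
      _ = 1/N := by rw [hd]; exact abs_of_nonneg (by positivity)
      _ < δ := hNδ
  have hkey : ∀ (k : ℕ) (t : unitInterval) (y : Y),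
      ‖f (T (k+1) t, y) - f (T k t, y)‖ < 1/4 := by
    intro k t y
    rw [← dist_eq_norm]
    apply hδf
    rw [Prod.dist_eq]
    simp only [dist_self]
    rw [max_eq_left dist_nonneg]
    exact hTdist k t
  refine ⟨fun p => ∑ k ∈ Finset.range N, chi (f (T (k+1) p.1, p.2) - f (T k p.1, p.2)),
    ?_, ?_⟩
  · apply continuous_finset_sum
    intro k _
    rw [continuous_iff_continuousAt]
    intro p
    have hc : Continuous fun p : unitInterval × Y =>
        f (T (k+1) p.1, p.2) - f (T k p.1, p.2) := by
      exact ((hf.comp (((hTcont (k+1)).comp continuous_fst).prodMk continuous_snd)).sub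
        (hf.comp (((hTcont k).comp continuous_fst).prodMk continuous_snd)))
    exact ContinuousAt.comp (g := chi)
      (chi_continuousAt (lt_trans (hkey k p.1 p.2) (by norm_num))) hc.continuousAt
  · rintro ⟨t, y⟩
    have hsum : ∀ (s : Finset ℕ) (F : ℕ → ℝ),
        ((∑ k ∈ s, F k : ℝ) : AddCircle (1:ℝ)) = ∑ k ∈ s, ((F k : ℝ) : AddCircle (1:ℝ)) := by
      intro s F
      exact map_sum (QuotientAddGroup.mk' _) F s
    rw [hsum]
    have : ∀ k, ((chi (f (T (k+1) t, y) - f (T k t, y)) : ℝ) : AddCircle (1:ℝ))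
        = f (T (k+1) t, y) - f (T k t, y) := fun k => chi_coe _
    simp only [this]
    rw [Finset.sum_range_sub (fun k => f (T k t, y))]
    have hTN : T N t = t := by
      apply Subtype.ext
      show min (t:ℝ) ((N:ℝ)/N) = t
      rw [div_self (ne_of_gt hN0)]
      exact min_eq_left t.2.2
    have hT0 : T 0 t = 0 := by
      apply Subtype.ext
      show min (t:ℝ) ((0:ℕ)/N) = 0
      push_cast
      rw [zero_div]
      exact min_eq_right t.2.1
    rw [hTN, hT0]

lemma coe_sub (a b : ℝ) : ((a - b : ℝ) : AddCircle (1:ℝ)) = (a : AddCircle (1:ℝ)) - (b : AddCircle (1:ℝ)) :=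
  rfl

lemma coe_sum (s : Finset ℕ) (F : ℕ → ℝ) :
    ((∑ k ∈ s, F k : ℝ) : AddCircle (1:ℝ)) = ∑ k ∈ s, ((F k : ℝ) : AddCircle (1:ℝ)) :=
  map_sum (QuotientAddGroup.mk' (AddSubgroup.zmultiples (1:ℝ))) F s

end Claim55

theorem periodic_homeo_of_torus_times_interval_boundary_translations_agree
    (ψ : (Torus2 × unitInterval) ≃ₜ (Torus2 × unitInterval))
    (hper : IsOfFinOrder ψ)
    -- `ψ` is isotopic to the identity:
    (hiso : ∃ F : C(unitInterval × (Torus2 × unitInterval), Torus2 × unitInterval),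
      (∀ x, F (0, x) = x) ∧ (∀ x, F (1, x) = ψ x) ∧
      ∀ t : unitInterval, IsHomeomorph fun x => F (t, x))
    -- the restrictions of `ψ` to the two boundary tori are translations
    -- by (rational) vectors `v₀` and `v₁`:
    (v₀ v₁ : Torus2) (hv₀ : IsRationalVector v₀) (hv₁ : IsRationalVector v₁)
    (hbd₀ : ∀ x : Torus2, ψ (x, 0) = (x + v₀, 0))
    (hbd₁ : ∀ x : Torus2, ψ (x, 1) = (x + v₁, 1)) :
    v₀ = v₁ := by

  classical
  obtain ⟨F, hF0, hF1, -⟩ := hiso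
  obtain ⟨g₁, hg₁c, hg₁⟩ := Claim55.exists_lift
    (fun q : unitInterval × (Torus2 × unitInterval) => (F q).1.1 - q.2.1.1)
    ((F.continuous.fst.fst).sub (continuous_snd.fst.fst))
  obtain ⟨g₂, hg₂c, hg₂⟩ := Claim55.exists_lift
    (fun q : unitInterval × (Torus2 × unitInterval) => (F q).1.2 - q.2.1.2)
    ((F.continuous.fst.snd).sub (continuous_snd.fst.snd))
  have hw₁ : ∀ p : Torus2 × unitInterval,
      ((g₁ (1, p) : ℝ) : AddCircle (1:ℝ)) = (ψ p).1.1 - p.1.1 := by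
    intro p
    have h := hg₁ (1, p)
    simp only at h
    rw [hF0, hF1] at h
    rw [h]
    abel
  have hw₂ : ∀ p : Torus2 × unitInterval,
      ((g₂ (1, p) : ℝ) : AddCircle (1:ℝ)) = (ψ p).1.2 - p.1.2 := by
    intro p
    have h := hg₂ (1, p)
    simp only at h
    rw [hF0, hF1] at h
    rw [h]
    abel
  set n := orderOf ψ with hndef
  have hnpos : 0 < n := hper.orderOf_pos
  have hψn : ψ ^ n = 1 := pow_orderOf_eq_one ψ
  have hmulapp : ∀ (k : ℕ) (p : Torus2 × unitInterval), (ψ ^ (k+1)) p = ψ ((ψ ^ k) p) := by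
    intro k p
    rw [pow_succ']
    rfl
  -- orbit of boundary points
  have horb : ∀ (v : Torus2) (i : unitInterval), (∀ x : Torus2, ψ (x, i) = (x + v, i)) →
      ∀ (k : ℕ) (x : Torus2), (ψ ^ k) (x, i) = (x + k • v, i) := by
    intro v i hbd k
    induction k with
    | zero =>
      intro x
      rw [pow_zero, zero_nsmul, add_zero]
      rfl
    | succ k ih =>
      intro x
      rw [hmulapp, ih, hbd, succ_nsmul, ← add_assoc]
  -- the boundary values of the lifts
  have hb₁ : ∀ (v : Torus2) (i : unitInterval), (∀ x : Torus2, ψ (x, i) = (x + v, i)) →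
      ∀ x : Torus2, ((g₁ (1, (x, i)) : ℝ) : AddCircle (1:ℝ)) = v.1 := by
    intro v i hbd x
    rw [hw₁ (x, i), hbd x]
    show (x + v).1 - x.1 = v.1
    rw [Prod.fst_add, add_sub_cancel_left]
  have hb₂ : ∀ (v : Torus2) (i : unitInterval), (∀ x : Torus2, ψ (x, i) = (x + v, i)) →
      ∀ x : Torus2, ((g₂ (1, (x, i)) : ℝ) : AddCircle (1:ℝ)) = v.2 := by
    intro v i hbd x
    rw [hw₂ (x, i), hbd x]
    show (x + v).2 - x.2 = v.2
    rw [Prod.snd_add, add_sub_cancel_left]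
  -- the lifts are constant on each boundary torus
  have hconst₁ : ∀ (v : Torus2) (i : unitInterval), (∀ x : Torus2, ψ (x, i) = (x + v, i)) →
      ∀ x y : Torus2, g₁ (1, (x, i)) = g₁ (1, (y, i)) := by
    intro v i hbd
    apply Claim55.const_of_lift (fun x : Torus2 => g₁ (1, (x, i)))
      (hg₁c.comp (continuous_const.prodMk (continuous_id.prodMk continuous_const)))
    intro x y
    rw [Claim55.coe_sub, hb₁ v i hbd x, hb₁ v i hbd y, sub_self]
  have hconst₂ : ∀ (v : Torus2) (i : unitInterval), (∀ x : Torus2, ψ (x, i) = (x + v, i)) →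
      ∀ x y : Torus2, g₂ (1, (x, i)) = g₂ (1, (y, i)) := by
    intro v i hbd
    apply Claim55.const_of_lift (fun x : Torus2 => g₂ (1, (x, i)))
      (hg₂c.comp (continuous_const.prodMk (continuous_id.prodMk continuous_const)))
    intro x y
    rw [Claim55.coe_sub, hb₂ v i hbd x, hb₂ v i hbd y, sub_self]
  -- the summed lift: mod 1 it telescopes to 0
  have hScoe₁ : ∀ p : Torus2 × unitInterval,
      ((∑ k ∈ Finset.range n, g₁ (1, (ψ ^ k) p) : ℝ) : AddCircle (1:ℝ)) = 0 := by
    intro p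
    rw [Claim55.coe_sum]
    have he : ∀ k, ((g₁ (1, (ψ ^ k) p) : ℝ) : AddCircle (1:ℝ))
        = ((ψ ^ (k+1)) p).1.1 - ((ψ ^ k) p).1.1 := by
      intro k
      rw [hw₁ ((ψ ^ k) p), hmulapp]
    rw [Finset.sum_congr rfl (fun k _ => he k),
      Finset.sum_range_sub (fun k => ((ψ ^ k) p).1.1), hψn, pow_zero]
    exact sub_self _
  have hScoe₂ : ∀ p : Torus2 × unitInterval,
      ((∑ k ∈ Finset.range n, g₂ (1, (ψ ^ k) p) : ℝ) : AddCircle (1:ℝ)) = 0 := by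
    intro p
    rw [Claim55.coe_sum]
    have he : ∀ k, ((g₂ (1, (ψ ^ k) p) : ℝ) : AddCircle (1:ℝ))
        = ((ψ ^ (k+1)) p).1.2 - ((ψ ^ k) p).1.2 := by
      intro k
      rw [hw₂ ((ψ ^ k) p), hmulapp]
    rw [Finset.sum_congr rfl (fun k _ => he k),
      Finset.sum_range_sub (fun k => ((ψ ^ k) p).1.2), hψn, pow_zero]
    exact sub_self _
  -- the summed lift is a constant function on the (connected) manifold
  have hS₁ : ∀ p q : Torus2 × unitInterval,
      (∑ k ∈ Finset.range n, g₁ (1, (ψ ^ k) p)) = ∑ k ∈ Finset.range n, g₁ (1, (ψ ^ k) q) := by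
    refine Claim55.const_of_lift
      (fun p : Torus2 × unitInterval => ∑ k ∈ Finset.range n, g₁ (1, (ψ ^ k) p)) ?_ ?_
    · apply continuous_finset_sum
      intro k _
      exact hg₁c.comp (continuous_const.prodMk (ψ ^ k).continuous)
    · intro p q
      rw [Claim55.coe_sub, hScoe₁ p, hScoe₁ q, sub_self]
  have hS₂ : ∀ p q : Torus2 × unitInterval,
      (∑ k ∈ Finset.range n, g₂ (1, (ψ ^ k) p)) = ∑ k ∈ Finset.range n, g₂ (1, (ψ ^ k) q) := by
    refine Claim55.const_of_lift
      (fun p : Torus2 × unitInterval => ∑ k ∈ Finset.range n, g₂ (1, (ψ ^ k) p)) ?_ ?_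
    · apply continuous_finset_sum
      intro k _
      exact hg₂c.comp (continuous_const.prodMk (ψ ^ k).continuous)
    · intro p q
      rw [Claim55.coe_sub, hScoe₂ p, hScoe₂ q, sub_self]
  -- evaluate the sums on the two boundary tori
  have hval₁ : ∀ (v : Torus2) (i : unitInterval), (∀ x : Torus2, ψ (x, i) = (x + v, i)) →
      (∑ k ∈ Finset.range n, g₁ (1, (ψ ^ k) ((0 : Torus2), i))) = n * g₁ (1, ((0 : Torus2), i)) := by
    intro v i hbd
    rw [Finset.sum_congr rfl (fun k _ => by
      rw [horb v i hbd k, hconst₁ v i hbd (0 + k • v) 0])]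
    rw [Finset.sum_const, Finset.card_range, nsmul_eq_mul]
  have hval₂ : ∀ (v : Torus2) (i : unitInterval), (∀ x : Torus2, ψ (x, i) = (x + v, i)) →
      (∑ k ∈ Finset.range n, g₂ (1, (ψ ^ k) ((0 : Torus2), i))) = n * g₂ (1, ((0 : Torus2), i)) := by
    intro v i hbd
    rw [Finset.sum_congr rfl (fun k _ => by
      rw [horb v i hbd k, hconst₂ v i hbd (0 + k • v) 0])]
    rw [Finset.sum_const, Finset.card_range, nsmul_eq_mul]
  have hnne : ((n : ℝ)) ≠ 0 := Nat.cast_ne_zero.mpr hnpos.ne'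
  have he₁ : g₁ (1, ((0 : Torus2), (0 : unitInterval))) = g₁ (1, ((0 : Torus2), (1 : unitInterval))) := by
    have := hS₁ ((0 : Torus2), (0 : unitInterval)) ((0 : Torus2), (1 : unitInterval))
    rw [hval₁ v₀ 0 hbd₀, hval₁ v₁ 1 hbd₁] at this
    exact mul_left_cancel₀ hnne this
  have he₂ : g₂ (1, ((0 : Torus2), (0 : unitInterval))) = g₂ (1, ((0 : Torus2), (1 : unitInterval))) := by
    have := hS₂ ((0 : Torus2), (0 : unitInterval)) ((0 : Torus2), (1 : unitInterval))
    rw [hval₂ v₀ 0 hbd₀, hval₂ v₁ 1 hbd₁] at this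
    exact mul_left_cancel₀ hnne this
  have h1 : v₀.1 = v₁.1 := by
    rw [← hb₁ v₀ 0 hbd₀ 0, ← hb₁ v₁ 1 hbd₁ 0, he₁]
  have h2 : v₀.2 = v₁.2 := by
    rw [← hb₂ v₀ 0 hbd₀ 0, ← hb₂ v₁ 1 hbd₁ 0, he₂]
  exact Prod.ext h1 h2
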